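/- Let F_{3,2} : ℝ^5 → ℝ^5 be given by F_{3,2}(x,y,u1,u2,u3) = (x³+y²+u1·x+u2·y+u3·x², x·y, u1, u2, u3). Then for every point q = (x,y,u1,u2,u3) ∈ ℝ^5, the derivative of F_{3,2} at q applied to ξ_4(q) = ((1/2)xy, −(1/2)y²−(1/4)u2·y, −2u3·xy, x³+y²+u1·x+u2·y+u3·x²+(1/4)u2², −(5/2)xy) equals η_4(F_{3,2}(q)), where η_4(X,Y,U1,U2,U3) = ((3/2)U1·Y, −(1/4)U2·Y, −2U3·Y, X+(1/4)U2², −(5/2)Y). In particular η_4 is liftable over F_{3,2}. -/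

import Mathlib

/-- The stable map `F₃₂` of discrete algebra type `B_{3,2}`. -/
noncomputable def F32 : ℝ × ℝ × ℝ × ℝ × ℝ → ℝ × ℝ × ℝ × ℝ × ℝ :=
  fun (x, y, u1, u2, u3) =>
    (x^3 + y^2 + u1*x + u2*y + u3*x^2, x*y, u1, u2, u3)

/-- The vector field `η₄` on the target of `F₃₂`. -/
noncomputable def eta4 : ℝ × ℝ × ℝ × ℝ × ℝ → ℝ × ℝ × ℝ × ℝ × ℝ :=
  fun (X, Y, U1, U2, U3) =>
    ((3/2)*U1*Y, -(1/4)*U2*Y, -2*U3*Y, X + (1/4)*U2^2, -(5/2)*Y)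

/-- The lowerable vector field `ξ₄` on the source of `F₃₂`. -/
noncomputable def xi4 : ℝ × ℝ × ℝ × ℝ × ℝ → ℝ × ℝ × ℝ × ℝ × ℝ :=
  fun (x, y, u1, u2, u3) =>
    ((1/2)*x*y, -(1/2)*y^2 - (1/4)*u2*y, -2*u3*x*y,
     x^3 + y^2 + u1*x + u2*y + u3*x^2 + (1/4)*u2^2, -(5/2)*x*y)

lemma F32_eq : F32 = fun q : ℝ × ℝ × ℝ × ℝ × ℝ =>
    (q.1*q.1*q.1 + q.2.1*q.2.1 + q.2.2.1*q.1 + q.2.2.2.1*q.2.1 + q.2.2.2.2*(q.1*q.1),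
     q.1*q.2.1, q.2.2.1, q.2.2.2.1, q.2.2.2.2) := by
  funext q; obtain ⟨x, y, u1, u2, u3⟩ := q
  simp only [F32]
  exact Prod.ext (by ring) rfl

/-- `η₄` is liftable over `F₃₂` via `ξ₄`:
for every `q`, `d(F₃₂)_q (ξ₄ q) = η₄ (F₃₂ q)`. -/
theorem eta4_liftable_over_F32 :
    ∀ q : ℝ × ℝ × ℝ × ℝ × ℝ, fderiv ℝ F32 q (xi4 q) = eta4 (F32 q) := by
  intro q
  obtain ⟨x, y, u1, u2, u3⟩ := q
  have hx : HasFDerivAt (fun q : ℝ × ℝ × ℝ × ℝ × ℝ => q.1)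
      (ContinuousLinearMap.fst ℝ ℝ (ℝ × ℝ × ℝ × ℝ)) (x,y,u1,u2,u3) :=
    hasFDerivAt_fst
  have hr : HasFDerivAt (fun q : ℝ × ℝ × ℝ × ℝ × ℝ => q.2)
      (ContinuousLinearMap.snd ℝ ℝ (ℝ × ℝ × ℝ × ℝ)) (x,y,u1,u2,u3) :=
    hasFDerivAt_snd
  have hy := hr.fst
  have hr2 := hr.snd
  have hu1 := hr2.fst
  have hr3 := hr2.snd
  have hu2 := hr3.fst
  have hu3 := hr3.snd
  have H := HasFDerivAt.prodMk ((((((hx.mul hx).mul hx).add (hy.mul hy)).add (hu1.mul hx)).add (hu2.mul hy)).add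
      (hu3.mul (hx.mul hx))) (HasFDerivAt.prodMk (hx.mul hy) (HasFDerivAt.prodMk hu1 (HasFDerivAt.prodMk hu2 hu3)))
  rw [F32_eq]
  erw [H.fderiv]
  simp [xi4, eta4, F32_eq]
  norm_num
  constructor
  · ring
  constructor
  · ring
  constructor
  · ring
  constructor
  · ring
  · ring
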